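/- arXiv:0812.1410 — 3 statements merged into one kernel-verified Lean document; each statement's English description precedes it below -/
import Mathlib

section
/- Let n ≥ 2 and let U_1, ..., U_n be independent uniform[0,1) random variables and S = U_1 + ... + U_n. Then the random variables S - U_1, S - U_2, ..., S - U_n, each reduced modulo 1, are independent and each uniformly distributed on [0,1). -/
open MeasureTheory ProbabilityTheory

instance real_fact_zero_lt_one : Fact ((0:ℝ) < 1) := ⟨one_pos⟩

section helpers

variable {Ω : Type*} [MeasurableSpace Ω] {μ : Measure Ω}

lemma my_map_pi_of_iIndep {ι : Type*} [Fintype ι] {β : ι → Type*}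
    {mβ : ∀ i, MeasurableSpace (β i)} {X : ∀ i, Ω → β i} [IsProbabilityMeasure μ]
    (hX : ∀ i, Measurable (X i)) (h : iIndepFun (m := mβ) X μ) :
    μ.map (fun ω i => X i ω) = Measure.pi (fun i => μ.map (X i)) := by
  haveI : ∀ i, IsProbabilityMeasure (μ.map (X i)) :=
    fun i => Measure.isProbabilityMeasure_map (hX i).aemeasurable
  refine (Measure.pi_eq fun s hs => ?_).symm
  rw [Measure.map_apply (measurable_pi_lambda _ fun i => hX i) (MeasurableSet.univ_pi hs)]
  have h1 : (fun ω i => X i ω) ⁻¹' Set.pi Set.univ s = ⋂ i ∈ Finset.univ, X i ⁻¹' s i := by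
    ext ω; simp [Set.mem_pi]
  rw [h1, h.measure_inter_preimage_eq_mul Finset.univ (fun i _ => hs i)]
  exact Finset.prod_congr rfl fun i _ => (Measure.map_apply (hX i) (hs i)).symm

lemma my_iIndep_of_map_pi {ι : Type*} [Fintype ι] {β : ι → Type*}
    {mβ : ∀ i, MeasurableSpace (β i)} {X : ∀ i, Ω → β i} [IsProbabilityMeasure μ]
    (hX : ∀ i, Measurable (X i))
    (h : μ.map (fun ω i => X i ω) = Measure.pi (fun i => μ.map (X i))) :
    iIndepFun (m := mβ) X μ := by
  classical
  haveI : ∀ i, IsProbabilityMeasure (μ.map (X i)) :=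
    fun i => Measure.isProbabilityMeasure_map (hX i).aemeasurable
  rw [iIndepFun_iff_measure_inter_preimage_eq_mul]
  intro S sets hsets
  set t : ∀ i, Set (β i) := fun i => if i ∈ S then sets i else Set.univ with ht
  have htm : ∀ i, MeasurableSet (t i) := fun i => by
    by_cases hi : i ∈ S <;> simp [t, hi, hsets _, MeasurableSet.univ]
  have h1 : (⋂ i ∈ S, X i ⁻¹' sets i) = (fun ω i => X i ω) ⁻¹' Set.pi Set.univ t := by
    ext ω
    simp only [Set.mem_iInter, Set.mem_preimage, Set.mem_pi, Set.mem_univ, true_imp_iff]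
    constructor
    · intro hω i
      by_cases hi : i ∈ S
      · simpa [t, hi] using hω i hi
      · simp [t, hi]
    · intro hω i hi
      simpa [t, hi] using hω i
  rw [h1, ← Measure.map_apply (measurable_pi_lambda _ fun i => hX i)
    (MeasurableSet.univ_pi htm), h, Measure.pi_pi]
  rw [← Finset.prod_subset (Finset.subset_univ S)
    (fun i _ hi => by simp [t, hi, measure_univ])]
  refine Finset.prod_congr rfl fun i hi => ?_
  rw [Measure.map_apply (hX i) (htm i)]
  simp [t, hi]

lemma my_map_eval_pi {ι : Type*} [Fintype ι] {β : ι → Type*} [∀ i, MeasurableSpace (β i)]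
    (ν : ∀ i, Measure (β i)) [∀ i, IsProbabilityMeasure (ν i)] (i : ι) :
    (Measure.pi ν).map (Function.eval i) = ν i := by
  classical
  ext s hs
  rw [Measure.map_apply (measurable_pi_apply i) hs, Set.eval_preimage, Measure.pi_pi]
  rw [show (fun j => ν j (Function.update (fun j => (Set.univ : Set (β j))) i s j)) =
      Function.update (fun j => ν j (Set.univ : Set (β j))) i (ν i s) from
    funext fun j => Function.apply_update (fun j t => ν j t) _ i s j]
  rw [Finset.prod_update_of_mem (Finset.mem_univ i)]
  simp

end helpers

local notation "𝕋" => AddCircle (1:ℝ)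

noncomputable def tLift : 𝕋 → ℝ := fun x => ((AddCircle.equivIco 1 0 x : Set.Ico (0:ℝ) (0+1)) : ℝ)

lemma tLift_measurable : Measurable tLift :=
  measurable_subtype_coe.comp (AddCircle.measurableEquivIco 1 0).measurable

set_option linter.unnecessarySimpa false in
lemma tLift_coe (y : ℝ) : tLift (y : 𝕋) = Int.fract y := by
  have := AddCircle.coe_equivIco_mk_apply (1:ℝ) y
  simpa [tLift] using this

instance : IsProbabilityMeasure (volume : Measure 𝕋) :=
  ⟨by simp [AddCircle.measure_univ]⟩

lemma map_mk_Ico :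
    (volume.restrict (Set.Ico (0:ℝ) 1)).map ((↑) : ℝ → 𝕋) = volume := by
  have h : volume.restrict (Set.Ico (0:ℝ) 1) = volume.restrict (Set.Ioc (0:ℝ) 1) :=
    Measure.restrict_congr_set Ico_ae_eq_Ioc
  rw [h]
  simpa using (AddCircle.measurePreserving_mk 1 0).map_eq

lemma map_tLift_volume : (volume : Measure 𝕋).map tLift = volume.restrict (Set.Ico (0:ℝ) 1) := by
  rw [← map_mk_Ico, Measure.map_map tLift_measurable AddCircle.measurable_mk']
  have h : (tLift ∘ ((↑) : ℝ → 𝕋)) =ᵐ[volume.restrict (Set.Ico (0:ℝ) 1)] id := by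
    refine Filter.eventually_of_mem (self_mem_ae_restrict measurableSet_Ico) fun x hx => ?_
    simp [Function.comp, tLift_coe, Int.fract_eq_self.2 hx]
  rw [Measure.map_congr h, Measure.map_id]

noncomputable def sumSub (n : ℕ) : (Fin n → 𝕋) →+ (Fin n → 𝕋) where
  toFun x := fun i => (∑ j, x j) - x i
  map_zero' := by ext i; simp
  map_add' x y := by
    ext i
    simp [Finset.sum_add_distrib]
    abel

lemma sumSub_continuous (n : ℕ) : Continuous (sumSub n) := by
  refine continuous_pi fun i => Continuous.sub ?_ (continuous_apply i)
  exact continuous_finset_sum _ fun j _ => continuous_apply j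

lemma sumSub_surjective (n : ℕ) (hn : 2 ≤ n) : Function.Surjective (sumSub n) := by
  intro y
  have hne : ((n : ℤ) - 1) ≠ 0 := by omega
  set s : 𝕋 := DivisibleBy.div (∑ i, y i) ((n : ℤ) - 1) with hs
  have hdiv : ((n : ℤ) - 1) • s = ∑ i, y i := DivisibleBy.div_cancel _ hne
  refine ⟨fun i => s - y i, ?_⟩
  ext i
  have hsum : (∑ j, (s - y j)) = (n : ℤ) • s - ∑ j, y j := by
    rw [Finset.sum_sub_distrib, Finset.sum_const, Finset.card_univ, Fintype.card_fin,
      natCast_zsmul]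
  show (∑ j, (s - y j)) - (s - y i) = y i
  rw [hsum, ← hdiv, sub_zsmul, one_zsmul]
  abel

lemma map_sumSub_pi (n : ℕ) (hn : 2 ≤ n) :
    (Measure.pi (fun _ : Fin n => (volume : Measure 𝕋))).map (sumSub n)
      = Measure.pi (fun _ : Fin n => (volume : Measure 𝕋)) := by
  haveI h2 : Measure.IsAddHaarMeasure
      ((Measure.pi (fun _ : Fin n => (volume : Measure 𝕋))).map (sumSub n)) :=
    Measure.isAddHaarMeasure_map_of_isFiniteMeasure _ (sumSub n) (sumSub_continuous n)
      (sumSub_surjective n hn)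
  haveI h3 : IsProbabilityMeasure
      ((Measure.pi (fun _ : Fin n => (volume : Measure 𝕋))).map (sumSub n)) :=
    Measure.isProbabilityMeasure_map (sumSub_continuous n).measurable.aemeasurable
  exact Measure.isAddHaarMeasure_eq_of_isProbabilityMeasure _ _

theorem sum_minus_coordinates_iid_uniform
    {Ω : Type*} [MeasurableSpace Ω] (μ : Measure Ω) [IsProbabilityMeasure μ]
    (n : ℕ) (hn : 2 ≤ n)
    (U : Fin n → Ω → ℝ)
    (hmeas : ∀ i, Measurable (U i))
    (hindep : iIndepFun U μ)
    (hunif : ∀ i, μ.map (U i) = volume.restrict (Set.Ico (0:ℝ) 1)) :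
    let V : Fin n → Ω → ℝ := fun i ω => Int.fract ((∑ j, U j ω) - U i ω)
    iIndepFun V μ ∧
      ∀ i, μ.map (V i) = volume.restrict (Set.Ico (0:ℝ) 1) := by
  intro V
  classical
  set X : Fin n → Ω → 𝕋 := fun i ω => ((U i ω : ℝ) : 𝕋) with hXdef
  have hXm : ∀ i, Measurable (X i) := fun i => AddCircle.measurable_mk'.comp (hmeas i)
  have hXlaw : ∀ i, μ.map (X i) = volume := by
    intro i
    rw [show X i = (((↑) : ℝ → 𝕋) ∘ U i) from rfl,
      ← Measure.map_map AddCircle.measurable_mk' (hmeas i), hunif i, map_mk_Ico]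
  have hXind : iIndepFun X μ :=
    hindep.comp _ (fun _ => AddCircle.measurable_mk')
  have hjointX : μ.map (fun ω i => X i ω) = Measure.pi (fun _ => (volume : Measure 𝕋)) := by
    rw [my_map_pi_of_iIndep hXm hXind]
    exact congrArg Measure.pi (funext fun i => hXlaw i)
  set W : Fin n → Ω → 𝕋 := fun i ω => (((∑ j, U j ω) - U i ω : ℝ) : 𝕋) with hWdef
  have hWm : ∀ i, Measurable (W i) := fun i =>
    AddCircle.measurable_mk'.comp
      ((Finset.measurable_sum _ fun j _ => hmeas j).sub (hmeas i))
  have hkey : (fun ω => sumSub n (fun i => X i ω)) = (fun ω i => W i ω) := by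
    funext ω
    ext i
    show (∑ j, ((U j ω : ℝ) : 𝕋)) - ((U i ω : ℝ) : 𝕋) = (((∑ j, U j ω) - U i ω : ℝ) : 𝕋)
    have hcoe : ((∑ j, U j ω : ℝ) : 𝕋) = ∑ j, ((U j ω : ℝ) : 𝕋) :=
      map_sum (QuotientAddGroup.mk' _) _ _
    rw [QuotientAddGroup.mk_sub, hcoe]
  have hjointW : μ.map (fun ω i => W i ω) = Measure.pi (fun _ => (volume : Measure 𝕋)) := by
    rw [← hkey,
      show (fun ω => sumSub n (fun i => X i ω)) = (sumSub n) ∘ (fun ω i => X i ω) from rfl,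
      ← Measure.map_map (sumSub_continuous n).measurable
        (measurable_pi_lambda _ fun i => hXm i),
      hjointX, map_sumSub_pi n hn]
  have hWlaw : ∀ i, μ.map (W i) = volume := by
    intro i
    rw [show W i = Function.eval i ∘ (fun ω j => W j ω) from rfl,
      ← Measure.map_map (measurable_pi_apply i) (measurable_pi_lambda _ fun i => hWm i),
      hjointW, my_map_eval_pi]
  have hWind : iIndepFun W μ := by
    apply my_iIndep_of_map_pi hWm
    rw [hjointW]
    exact congrArg Measure.pi (funext fun i => (hWlaw i).symm)
  have hV : ∀ i, V i = tLift ∘ W i := by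
    intro i
    funext ω
    exact (tLift_coe _).symm
  constructor
  · have : V = fun i => tLift ∘ W i := funext hV
    rw [this]
    exact hWind.comp _ (fun _ => tLift_measurable)
  · intro i
    rw [hV i, ← Measure.map_map tLift_measurable (hWm i), hWlaw i, map_tLift_volume]
end

section
/- Let T be a self-adjoint Hilbert–Schmidt integral operator with symmetric kernel φ: X × X → [0,1] on a probability space (X, μ), with eigenvalues (λ_i). Then for every integer k ≥ 2, ∫···∫ φ(x_1,x_2)φ(x_2,x_3)···φ(x_k,x_1) dμ(x_1)···dμ(x_k) = Tr(T^k) = ∑_i λ_i^k. -/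
open MeasureTheory Filter

section Aux

variable {X : Type*} [MeasurableSpace X] {μ : Measure X} [IsProbabilityMeasure μ]

private lemma integrable_of_bdd {Y : Type*} [MeasurableSpace Y] {ν : Measure Y}
    [IsFiniteMeasure ν] {f : Y → ℝ} (hm : AEStronglyMeasurable f ν) (hb : ∀ y, |f y| ≤ 1) :
    Integrable f ν :=
  (integrable_const (1:ℝ)).mono' hm (Filter.Eventually.of_forall fun y => by
    simpa [Real.norm_eq_abs] using hb y)

private lemma peel_last {n : ℕ} (F : (Fin (n+1) → X) → ℝ) (hFm : Measurable F)
    (hFb : ∀ v, |F v| ≤ 1) :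
    ∫ v, F v ∂(Measure.pi fun _ => μ)
      = ∫ w, (∫ z, F (Fin.snoc w z) ∂μ) ∂(Measure.pi fun _ : Fin n => μ) := by
  have hmp := measurePreserving_piFinSuccAbove (fun _ : Fin (n+1) => μ) (Fin.last n)
  set e := MeasurableEquiv.piFinSuccAbove (fun _ : Fin (n+1) => X) (Fin.last n) with he
  have h1 : ∫ v, F v ∂(Measure.pi fun _ => μ)
      = ∫ p : X × (Fin n → X), F (e.symm p)
          ∂(μ.prod (Measure.pi fun _ : Fin n => μ)) :=
    ((hmp.symm e).integral_comp e.symm.measurableEmbedding F).symm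
  have hsymm : ∀ p : X × (Fin n → X), e.symm p = Fin.snoc p.2 p.1 := by
    intro p
    rw [he]
    simp [MeasurableEquiv.piFinSuccAbove, Fin.insertNthEquiv, Fin.insertNth_last']
  have hint : Integrable (fun p : X × (Fin n → X) => F (e.symm p))
      (μ.prod (Measure.pi fun _ : Fin n => μ)) :=
    integrable_of_bdd ((hFm.comp e.symm.measurable).aestronglyMeasurable) (fun p => hFb _)
  rw [h1, integral_prod _ hint]
  rw [integral_integral_swap]
  · simp only [hsymm]
  · exact hint

end Aux

section Main

variable {X : Type*} [MeasurableSpace X] {μ : Measure X} [IsProbabilityMeasure μ]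

private lemma main_ind
    (φ : X → X → ℝ) (hφmeas : Measurable (Function.uncurry φ))
    (hφ01 : ∀ x y, φ x y ∈ Set.Icc (0:ℝ) 1)
    (a : ℕ → X → ℝ) (lam : ℕ → ℝ)
    (ham : ∀ i, Measurable (a i)) (hab : ∀ i x, |a i x| ≤ 1)
    (hP : ∀ x (s : Finset ℕ), ∑ i ∈ s, (a i x)^2 ≤ 1)
    (h3 : ∀ i x, ∫ z, φ x z * a i z ∂μ = lam i * a i x)
    (h4 : ∀ i, ∫ x, (a i x)^2 ∂μ = lam i ^ 2)
    (hl1 : ∀ i, |lam i| ≤ 1) (hl2 : Summable fun i => lam i ^ 2) :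
    ∀ m p : ℕ, ∫ x : Fin (m+1) → X,
        (∏ j : Fin m, φ (x j.castSucc) (x j.succ)) *
          (∑' i, lam i ^ p * a i (x (Fin.last m)) * a i (x 0))
        ∂(Measure.pi fun _ => μ)
      = ∑' i, lam i ^ (p + m + 2) := by
  -- basic bounds
  have hφb : ∀ x y, |φ x y| ≤ 1 := fun x y =>
    abs_le.2 ⟨by linarith [(hφ01 x y).1], (hφ01 x y).2⟩
  have hφx : ∀ x, Measurable (φ x) := fun x => hφmeas.of_uncurry_left
  -- summability of squares
  have hsq : ∀ x, Summable fun i => (a i x)^2 := fun x =>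
    summable_of_sum_le (fun i => sq_nonneg _) (hP x)
  -- termwise domination
  have hdom : ∀ (c : ℕ → ℝ), (∀ i, |c i| ≤ 1) → ∀ x y i,
      |c i * a i x * a i y| ≤ ((a i x)^2 + (a i y)^2)/2 := by
    intro c hc x y i
    have h1 : |c i * a i x * a i y| = |c i| * |a i x| * |a i y| := by
      rw [abs_mul, abs_mul]
    have h2 : |a i x| * |a i y| ≤ ((a i x)^2 + (a i y)^2)/2 := by
      nlinarith [sq_nonneg (|a i x| - |a i y|), sq_abs (a i x), sq_abs (a i y)]
    have h4' : |c i| * |a i x| * |a i y| ≤ 1 * (|a i x| * |a i y|) := by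
      rw [mul_assoc]
      exact mul_le_mul_of_nonneg_right (hc i)
        (mul_nonneg (abs_nonneg _) (abs_nonneg _))
    rw [h1]
    linarith
  have hcsum : ∀ (c : ℕ → ℝ), (∀ i, |c i| ≤ 1) → ∀ x y,
      Summable fun i => c i * a i x * a i y := by
    intro c hc x y
    apply Summable.of_abs
    apply Summable.of_nonneg_of_le (fun i => abs_nonneg _) (fun i => hdom c hc x y i)
    exact (((hsq x).add (hsq y)).div_const 2)
  have hpartial : ∀ (c : ℕ → ℝ), (∀ i, |c i| ≤ 1) → ∀ x y (s : Finset ℕ),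
      |∑ i ∈ s, c i * a i x * a i y| ≤ 1 := by
    intro c hc x y s
    calc |∑ i ∈ s, c i * a i x * a i y| ≤ ∑ i ∈ s, |c i * a i x * a i y| :=
          Finset.abs_sum_le_sum_abs _ _
      _ ≤ ∑ i ∈ s, ((a i x)^2 + (a i y)^2)/2 :=
          Finset.sum_le_sum fun i _ => hdom c hc x y i
      _ = ((∑ i ∈ s, (a i x)^2) + ∑ i ∈ s, (a i y)^2)/2 := by
          rw [← Finset.sum_add_distrib, Finset.sum_div]
      _ ≤ (1 + 1)/2 := by
          have := hP x s; have := hP y s; linarith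
      _ = 1 := by norm_num
  have hSbd : ∀ (c : ℕ → ℝ), (∀ i, |c i| ≤ 1) → ∀ x y,
      |∑' i, c i * a i x * a i y| ≤ 1 := by
    intro c hc x y
    have h := (hcsum c hc x y).hasSum
    exact le_of_tendsto h.abs (Filter.Eventually.of_forall fun s => hpartial c hc x y s)
  have hlpow : ∀ p i, |lam i ^ p| ≤ 1 := by
    intro p i
    rw [abs_pow]
    exact pow_le_one₀ (abs_nonneg _) (hl1 i)
  -- summability of lam^(p+2)
  have hlsum : ∀ p : ℕ, Summable fun i => lam i ^ (p + 2) := by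
    intro p
    apply Summable.of_abs
    apply Summable.of_nonneg_of_le (fun i => abs_nonneg _) _ hl2
    intro i
    calc |lam i ^ (p+2)| = |lam i|^p * |lam i|^2 := by rw [← abs_pow, ← abs_pow, ← abs_mul, ← pow_add]
      _ ≤ 1 * |lam i|^2 := by
          apply mul_le_mul_of_nonneg_right (pow_le_one₀ (abs_nonneg _) (hl1 i)) (by positivity)
      _ = lam i ^ 2 := by rw [one_mul, sq_abs]
  -- measurability of the S functions
  have hSm : ∀ (c : ℕ → ℝ), (∀ i, |c i| ≤ 1) →
      Measurable (fun q : X × X => ∑' i, c i * a i q.1 * a i q.2) := by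
    intro c hc
    apply measurable_of_tendsto_metrizable
      (f := fun n (q : X × X) => ∑ i ∈ Finset.range n, c i * a i q.1 * a i q.2)
    · intro n
      exact Finset.measurable_sum _ fun i _ =>
        ((measurable_const.mul ((ham i).comp measurable_fst)).mul ((ham i).comp measurable_snd))
    · rw [tendsto_pi_nhds]
      intro q
      exact (hcsum c hc q.1 q.2).hasSum.tendsto_sum_nat
  -- the alpha step
  have halpha : ∀ (p : ℕ) (x y : X),
      ∫ z, φ x z * (∑' i, lam i ^ p * a i z * a i y) ∂μ
        = ∑' i, lam i ^ (p+1) * a i x * a i y := by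
    intro p x y
    have hFn_meas : ∀ n : ℕ, AEStronglyMeasurable
        (fun z => φ x z * ∑ i ∈ Finset.range n, lam i ^ p * a i z * a i y) μ := by
      intro n
      exact ((hφx x).mul (Finset.measurable_sum _ fun i _ =>
        (measurable_const.mul (ham i)).mul measurable_const)).aestronglyMeasurable
    have hbound : ∀ n : ℕ, ∀ᵐ z ∂μ,
        ‖φ x z * ∑ i ∈ Finset.range n, lam i ^ p * a i z * a i y‖ ≤ (1:ℝ) := by
      intro n
      refine Filter.Eventually.of_forall fun z => ?_
      rw [Real.norm_eq_abs, abs_mul]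
      calc |φ x z| * |∑ i ∈ Finset.range n, lam i ^ p * a i z * a i y|
          ≤ 1 * 1 := mul_le_mul (hφb x z) (hpartial _ (hlpow p) z y _)
            (abs_nonneg _) zero_le_one
        _ = 1 := by norm_num
    have hlim : ∀ᵐ z ∂μ, Tendsto
        (fun n => φ x z * ∑ i ∈ Finset.range n, lam i ^ p * a i z * a i y)
        atTop (nhds (φ x z * ∑' i, lam i ^ p * a i z * a i y)) := by
      refine Filter.Eventually.of_forall fun z => ?_
      exact ((hcsum _ (hlpow p) z y).hasSum.tendsto_sum_nat).const_mul _
    have h1 := tendsto_integral_of_dominated_convergence (bound := fun _ => (1:ℝ))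
      hFn_meas (integrable_const _) hbound hlim
    -- compute the integrals of the partial sums
    have h2 : ∀ n, ∫ z, φ x z * ∑ i ∈ Finset.range n, lam i ^ p * a i z * a i y ∂μ
        = ∑ i ∈ Finset.range n, lam i ^ (p+1) * a i x * a i y := by
      intro n
      have : ∀ z, φ x z * ∑ i ∈ Finset.range n, lam i ^ p * a i z * a i y
          = ∑ i ∈ Finset.range n, (lam i ^ p * a i y) * (φ x z * a i z) := by
        intro z
        rw [Finset.mul_sum]
        exact Finset.sum_congr rfl fun i _ => by ring
      simp_rw [this]
      rw [integral_finset_sum]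
      · refine Finset.sum_congr rfl fun i _ => ?_
        rw [integral_const_mul, h3 i x]
        ring
      · intro i _
        apply integrable_of_bdd
        · exact (measurable_const.mul ((hφx x).mul (ham i))).aestronglyMeasurable
        · intro z
          rw [abs_mul, abs_mul]
          have hA : |lam i ^ p| * |a i y| ≤ 1 :=
            mul_le_one₀ (hlpow p i) (abs_nonneg _) (hab i y)
          have hB : |φ x z * a i z| ≤ 1 := by
            rw [abs_mul]
            exact mul_le_one₀ (hφb x z) (abs_nonneg _) (hab i z)
          have := mul_le_mul hA hB (abs_nonneg _) zero_le_one
          simpa using this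
    have h3' : Tendsto (fun n => ∑ i ∈ Finset.range n, lam i ^ (p+1) * a i x * a i y)
        atTop (nhds (∑' i, lam i ^ (p+1) * a i x * a i y)) :=
      (hcsum _ (hlpow (p+1)) x y).hasSum.tendsto_sum_nat
    simp_rw [h2] at h1
    exact tendsto_nhds_unique h1 h3'
  -- the beta step
  have hbeta : ∀ p : ℕ, ∫ z, (∑' i, lam i ^ p * a i z * a i z) ∂μ
      = ∑' i, lam i ^ (p + 2) := by
    intro p
    have hFn_meas : ∀ n : ℕ, AEStronglyMeasurable
        (fun z => ∑ i ∈ Finset.range n, lam i ^ p * a i z * a i z) μ := by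
      intro n
      exact (Finset.measurable_sum _ fun i _ =>
        (measurable_const.mul (ham i)).mul (ham i)).aestronglyMeasurable
    have hbound : ∀ n : ℕ, ∀ᵐ z ∂μ,
        ‖∑ i ∈ Finset.range n, lam i ^ p * a i z * a i z‖ ≤ (1:ℝ) := by
      intro n
      exact Filter.Eventually.of_forall fun z => by
        rw [Real.norm_eq_abs]; exact hpartial _ (hlpow p) z z _
    have hlim : ∀ᵐ z ∂μ, Tendsto
        (fun n => ∑ i ∈ Finset.range n, lam i ^ p * a i z * a i z)
        atTop (nhds (∑' i, lam i ^ p * a i z * a i z)) :=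
      Filter.Eventually.of_forall fun z => (hcsum _ (hlpow p) z z).hasSum.tendsto_sum_nat
    have h1 := tendsto_integral_of_dominated_convergence (bound := fun _ => (1:ℝ))
      hFn_meas (integrable_const _) hbound hlim
    have h2 : ∀ n, ∫ z, ∑ i ∈ Finset.range n, lam i ^ p * a i z * a i z ∂μ
        = ∑ i ∈ Finset.range n, lam i ^ (p+2) := by
      intro n
      rw [integral_finset_sum]
      · refine Finset.sum_congr rfl fun i _ => ?_
        have : ∀ z, lam i ^ p * a i z * a i z = lam i ^ p * (a i z)^2 := fun z => by ring
        simp_rw [this]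
        rw [integral_const_mul, h4 i]
        ring
      · intro i _
        apply integrable_of_bdd
        · exact ((measurable_const.mul (ham i)).mul (ham i)).aestronglyMeasurable
        · intro z
          calc |lam i ^ p * a i z * a i z| ≤ ((a i z)^2 + (a i z)^2)/2 := hdom _ (hlpow p) z z i
            _ ≤ 1 := by nlinarith [hab i z, sq_abs (a i z), abs_nonneg (a i z)]
    simp_rw [h2] at h1
    exact tendsto_nhds_unique h1 ((hlsum p).hasSum.tendsto_sum_nat)
  -- now the induction
  intro m
  induction m with
  | zero =>
    intro p
    have hlast : (Fin.last 0) = (0 : Fin 1) := rfl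
    simp only [Finset.univ_eq_empty, Finset.prod_empty, one_mul, hlast]
    set G : X → ℝ := fun z => ∑' i, lam i ^ p * a i z * a i z with hG
    have hGm : Measurable G :=
      (hSm (fun i => lam i ^ p) (hlpow p)).comp (measurable_id.prodMk measurable_id)
    have hGb : ∀ z, |G z| ≤ 1 := fun z => hSbd _ (hlpow p) z z
    have hpeel := peel_last (n := 0) (μ := μ)
      (fun v => G (v 0)) (hGm.comp (measurable_pi_apply 0)) (fun v => hGb _)
    have hsnoc : ∀ (w : Fin 0 → X) (z : X), (Fin.snoc w z : Fin 1 → X) 0 = z := by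
      intro w z
      simp [Fin.snoc]
    calc ∫ v : Fin 1 → X, G (v 0) ∂(Measure.pi fun _ => μ)
        = ∫ w : Fin 0 → X, (∫ z, G ((Fin.snoc w z : Fin 1 → X) 0) ∂μ)
            ∂(Measure.pi fun _ : Fin 0 => μ) := hpeel
      _ = ∫ w : Fin 0 → X, (∫ z, G z ∂μ) ∂(Measure.pi fun _ : Fin 0 => μ) := by
          simp only [hsnoc]
      _ = ∫ z, G z ∂μ := by rw [integral_const]; simp
      _ = ∑' i, lam i ^ (p + 0 + 2) := by rw [hG, hbeta p]
  | succ m ih =>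
    intro p
    -- integrand and its properties
    set F : (Fin (m+2) → X) → ℝ := fun x =>
      (∏ j : Fin (m+1), φ (x j.castSucc) (x j.succ)) *
        (∑' i, lam i ^ p * a i (x (Fin.last (m+1))) * a i (x 0)) with hF
    have hprodb : ∀ (x : Fin (m+2) → X),
        |∏ j : Fin (m+1), φ (x j.castSucc) (x j.succ)| ≤ 1 := by
      intro x
      rw [Finset.abs_prod]
      apply Finset.prod_le_one
      · intro j _; exact abs_nonneg _
      · intro j _; exact hφb _ _
    have hFm : Measurable F := by
      apply Measurable.mul
      · refine Finset.measurable_prod _ fun j _ => ?_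
        have hm : Measurable fun v : Fin (m+2) → X => (v j.castSucc, v j.succ) :=
          (measurable_pi_apply _).prodMk (measurable_pi_apply _)
        exact hφmeas.comp hm
      · have hm : Measurable fun v : Fin (m+2) → X => (v (Fin.last (m+1)), v 0) :=
          (measurable_pi_apply _).prodMk (measurable_pi_apply _)
        exact (hSm (fun i => lam i ^ p) (hlpow p)).comp hm
    have hFb : ∀ v, |F v| ≤ 1 := by
      intro v
      rw [hF, abs_mul]
      calc |∏ j : Fin (m+1), φ (v j.castSucc) (v j.succ)| *
            |∑' i, lam i ^ p * a i (v (Fin.last (m+1))) * a i (v 0)|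
          ≤ 1 * 1 := mul_le_mul (hprodb v) (hSbd _ (hlpow p) _ _) (abs_nonneg _) zero_le_one
        _ = 1 := by norm_num
    have hpeel := peel_last (n := m+1) (μ := μ) F hFm hFb
    -- simplify F (snoc w z)
    have hFsnoc : ∀ (w : Fin (m+1) → X) (z : X),
        F (Fin.snoc w z) = (∏ j : Fin m, φ (w j.castSucc) (w j.succ)) *
          (φ (w (Fin.last m)) z * (∑' i, lam i ^ p * a i z * a i (w 0))) := by
      intro w z
      simp only [hF]
      have h0 : (Fin.snoc w z : Fin (m+2) → X) 0 = w 0 := by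
        have : (0 : Fin (m+2)) = Fin.castSucc (0 : Fin (m+1)) := rfl
        rw [this, Fin.snoc_castSucc]
      have hlast : (Fin.snoc w z : Fin (m+2) → X) (Fin.last (m+1)) = z := by simp
      have hprod : (∏ j : Fin (m+1), φ ((Fin.snoc w z : Fin (m+2) → X) j.castSucc)
            ((Fin.snoc w z : Fin (m+2) → X) j.succ))
          = (∏ j : Fin m, φ (w j.castSucc) (w j.succ)) * φ (w (Fin.last m)) z := by
        rw [Fin.prod_univ_castSucc]
        congr 1
        · refine Finset.prod_congr rfl fun j _ => ?_
          rw [Fin.succ_castSucc, Fin.snoc_castSucc, Fin.snoc_castSucc]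
        · rw [Fin.succ_last, Fin.snoc_last, Fin.snoc_castSucc]
      rw [hprod, h0, hlast, mul_assoc]
    rw [hpeel]
    have hinner : ∀ w : Fin (m+1) → X,
        ∫ z, F (Fin.snoc w z) ∂μ
          = (∏ j : Fin m, φ (w j.castSucc) (w j.succ)) *
              (∑' i, lam i ^ (p+1) * a i (w (Fin.last m)) * a i (w 0)) := by
      intro w
      have : ∀ z, F (Fin.snoc w z) = (∏ j : Fin m, φ (w j.castSucc) (w j.succ)) *
          (φ (w (Fin.last m)) z * (∑' i, lam i ^ p * a i z * a i (w 0))) := hFsnoc w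
      simp_rw [this]
      rw [integral_const_mul, halpha p (w (Fin.last m)) (w 0)]
    calc ∫ w, (∫ z, F (Fin.snoc w z) ∂μ) ∂(Measure.pi fun _ : Fin (m+1) => μ)
        = ∫ w : Fin (m+1) → X, (∏ j : Fin m, φ (w j.castSucc) (w j.succ)) *
            (∑' i, lam i ^ (p+1) * a i (w (Fin.last m)) * a i (w 0))
            ∂(Measure.pi fun _ => μ) :=
          integral_congr_ae (Filter.Eventually.of_forall fun w => hinner w)
      _ = ∑' i, lam i ^ ((p+1) + m + 2) := ih (p+1)
      _ = ∑' i, lam i ^ (p + (m+1) + 2) := by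
          congr 1
          ext i
          congr 1
          omega

end Main


local notation "⟪" x ", " y "⟫" => @inner ℝ _ _ x y

private lemma myParseval {H : Type*} [NormedAddCommGroup H] [InnerProductSpace ℝ H]
    (e : HilbertBasis ℕ ℝ H) (u v : H) :
    HasSum (fun i => (⟪u, e i⟫ : ℝ) * ⟪v, e i⟫) (⟪u, v⟫ : ℝ) := by
  have h := e.hasSum_inner_mul_inner u v
  have hfun : ∀ i, (⟪u, e i⟫ : ℝ) * ⟪e i, v⟫ = ⟪u, e i⟫ * ⟪v, e i⟫ := fun i => by
    rw [real_inner_comm v (e i)]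
  simpa [hfun] using h

theorem cycle_integral_eq_sum_eigenvalue_powers
    {X : Type*} [MeasurableSpace X] (μ : Measure X) [IsProbabilityMeasure μ]
    (φ : X → X → ℝ)
    (hφmeas : Measurable (Function.uncurry φ))
    (hφsymm : ∀ x y, φ x y = φ y x)
    (hφ01 : ∀ x y, φ x y ∈ Set.Icc (0:ℝ) 1)
    (T : Lp ℝ 2 μ →L[ℝ] Lp ℝ 2 μ)
    (hT : ∀ g : Lp ℝ 2 μ, (T g : X → ℝ) =ᵐ[μ] fun x => ∫ y, φ x y * g y ∂μ)
    (lam : ℕ → ℝ) (e : HilbertBasis ℕ ℝ (Lp ℝ 2 μ))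
    (heig : ∀ i, T (e i) = lam i • e i)
    (k : ℕ) (hk : 2 ≤ k) :
    ∫ x : Fin k → X, ∏ i, φ (x i) (x ⟨(i.val + 1) % k, Nat.mod_lt _ (by omega)⟩) ∂(Measure.pi fun _ => μ) =
      ∑' i, lam i ^ k := by
  obtain ⟨m, rfl⟩ : ∃ m, k = m + 2 := ⟨k - 2, by omega⟩
  have hφx : ∀ x, Measurable (φ x) := fun x => hφmeas.of_uncurry_left
  have hφb : ∀ x y, |φ x y| ≤ 1 := fun x y =>
    abs_le.2 ⟨by linarith [(hφ01 x y).1], (hφ01 x y).2⟩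
  -- measurable representatives of the basis vectors
  set g : ℕ → X → ℝ := fun i => (Lp.aestronglyMeasurable (e i)).mk _ with hgdef
  have hgm : ∀ i, Measurable (g i) := fun i =>
    (Lp.aestronglyMeasurable (e i)).stronglyMeasurable_mk.measurable
  have hge : ∀ i, (e i : X → ℝ) =ᵐ[μ] g i := fun i =>
    (Lp.aestronglyMeasurable (e i)).ae_eq_mk
  -- the coefficient functions
  set a : ℕ → X → ℝ := fun i x => ∫ z, φ x z * g i z ∂μ with hadef
  have ham : ∀ i, Measurable (a i) := by
    intro i
    have hum : Measurable fun p : X × X => φ p.1 p.2 * g i p.2 :=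
      hφmeas.mul ((hgm i).comp measurable_snd)
    exact (MeasureTheory.StronglyMeasurable.integral_prod_right
      (f := fun x z => φ x z * g i z) hum.stronglyMeasurable).measurable
  -- the Lp elements given by the kernel sections
  have hmem : ∀ x, MemLp (φ x) 2 μ := fun x =>
    MemLp.of_bound ((hφx x).aestronglyMeasurable) 1
      (Filter.Eventually.of_forall fun y => by
        rw [Real.norm_eq_abs]; exact hφb x y)
  set F : X → Lp ℝ 2 μ := fun x => MemLp.toLp (φ x) (hmem x) with hFdef
  have key1 : ∀ x i, ⟪F x, e i⟫ = a i x := by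
    intro x i
    rw [L2.inner_def]
    refine integral_congr_ae ?_
    filter_upwards [(hmem x).coeFn_toLp, hge i] with z h1 h2
    simp [h1, h2, RCLike.inner_apply]
    simp only [hFdef, h1]; ring
  have key2 : ∀ x y, ⟪F x, F y⟫ = ∫ z, φ x z * φ y z ∂μ := by
    intro x y
    rw [L2.inner_def]
    refine integral_congr_ae ?_
    filter_upwards [(hmem x).coeFn_toLp, (hmem y).coeFn_toLp] with z h1 h2
    simp [h1, h2, RCLike.inner_apply]
    simp only [hFdef, h1, h2]; ring
  have hsqint : ∀ x, ∫ z, φ x z * φ x z ∂μ ≤ 1 := by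
    intro x
    calc ∫ z, φ x z * φ x z ∂μ ≤ ∫ _z, (1:ℝ) ∂μ := by
          refine integral_mono ?_ (integrable_const _) ?_
          · exact integrable_of_bdd ((hφx x).mul (hφx x)).aestronglyMeasurable
              (fun z => by
                rw [abs_mul]
                exact mul_le_one₀ (hφb x z) (abs_nonneg _) (hφb x z))
          · intro z
            show φ x z * φ x z ≤ (1:ℝ)
            have h0 := (hφ01 x z).1
            have h1 := (hφ01 x z).2
            nlinarith
      _ = 1 := by simp
  have hinself : ∀ x, ⟪F x, F x⟫ ≤ 1 := fun x => by rw [key2]; exact hsqint x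
  have hnrm : ∀ x, ‖F x‖ ≤ 1 := by
    intro x
    have h1 : ‖F x‖ ^ 2 ≤ 1 := by rw [← real_inner_self_eq_norm_sq]; exact hinself x
    nlinarith [norm_nonneg (F x)]
  have hnrme : ∀ i, ‖(e i : Lp ℝ 2 μ)‖ = 1 := fun i => e.orthonormal.1 i
  have hab : ∀ i x, |a i x| ≤ 1 := by
    intro i x
    have h := abs_real_inner_le_norm (F x) (e i)
    rw [key1] at h
    have h2 : ‖F x‖ * ‖(e i : Lp ℝ 2 μ)‖ ≤ 1 := by
      rw [hnrme i, mul_one]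
      exact hnrm x
    linarith
  -- Bessel
  have hP : ∀ x (s : Finset ℕ), ∑ i ∈ s, (a i x)^2 ≤ 1 := by
    intro x s
    have hs := myParseval e (F x) (F x)
    have hfun : (fun i => (⟪F x, e i⟫ : ℝ) * ⟪F x, e i⟫) = fun i => (a i x)^2 := by
      funext i
      rw [key1]
      ring
    rw [hfun] at hs
    have hs' := hs
    calc ∑ i ∈ s, (a i x)^2 ≤ ⟪F x, F x⟫ :=
          sum_le_hasSum s (fun i _ => sq_nonneg _) hs'
      _ ≤ 1 := hinself x
  -- eigenfunction identity
  have hae : ∀ i, a i =ᵐ[μ] fun x => lam i * g i x := by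
    intro i
    have hTe := hT (e i)
    have h5 : (fun x => ∫ y, φ x y * (e i : X → ℝ) y ∂μ) = a i := by
      funext x
      refine integral_congr_ae ?_
      filter_upwards [hge i] with y hy
      rw [hy]
    rw [h5, heig i] at hTe
    have h6 : ((lam i • e i : Lp ℝ 2 μ) : X → ℝ) =ᵐ[μ] fun x => lam i * g i x := by
      filter_upwards [Lp.coeFn_smul (lam i) (e i), hge i] with x h1 h2
      rw [h1]
      simp [h2]
    exact hTe.symm.trans h6
  have h3 : ∀ i x, ∫ z, φ x z * a i z ∂μ = lam i * a i x := by
    intro i x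
    have h1 : ∫ z, φ x z * a i z ∂μ = ∫ z, lam i * (φ x z * g i z) ∂μ := by
      refine integral_congr_ae ?_
      filter_upwards [hae i] with z hz
      rw [hz]; ring
    rw [h1, integral_const_mul]
  have hgsq : ∀ i, ∫ z, g i z * g i z ∂μ = 1 := by
    intro i
    have h1 : ⟪(e i : Lp ℝ 2 μ), (e i : Lp ℝ 2 μ)⟫ = 1 := by
      rw [real_inner_self_eq_norm_sq, hnrme i]; norm_num
    rw [L2.inner_def] at h1
    rw [← h1]
    refine integral_congr_ae ?_
    filter_upwards [hge i] with z hz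
    simp [hz, RCLike.inner_apply]
    ring
  have h4 : ∀ i, ∫ x, (a i x)^2 ∂μ = lam i ^ 2 := by
    intro i
    have h1 : ∫ x, (a i x)^2 ∂μ = ∫ x, lam i ^ 2 * (g i x * g i x) ∂μ := by
      refine integral_congr_ae ?_
      filter_upwards [hae i] with x hx
      rw [hx]; ring
    rw [h1, integral_const_mul, hgsq i, mul_one]
  have haint : ∀ i, Integrable (fun x => (a i x)^2) μ := by
    intro i
    apply integrable_of_bdd ((ham i).pow_const 2).aestronglyMeasurable
    intro x
    rw [abs_pow]
    exact pow_le_one₀ (abs_nonneg _) (hab i x)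
  have hl1 : ∀ i, |lam i| ≤ 1 := by
    intro i
    have h1 : lam i ^ 2 ≤ 1 := by
      rw [← h4 i]
      calc ∫ x, (a i x)^2 ∂μ ≤ ∫ _x, (1:ℝ) ∂μ := by
            refine integral_mono (haint i) (integrable_const _) ?_
            intro x
            show (a i x)^2 ≤ (1:ℝ)
            nlinarith [hab i x, sq_abs (a i x), abs_nonneg (a i x)]
        _ = 1 := by simp
    nlinarith [abs_nonneg (lam i), sq_abs (lam i)]
  have hl2 : Summable fun i => lam i ^ 2 := by
    apply summable_of_sum_le (fun i => sq_nonneg (lam i))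
    intro s
    have h1 : ∑ i ∈ s, lam i ^ 2 = ∫ x, ∑ i ∈ s, (a i x)^2 ∂μ := by
      rw [integral_finset_sum s (fun i _ => haint i)]
      exact (Finset.sum_congr rfl fun i _ => (h4 i).symm)
    rw [h1]
    calc ∫ x, ∑ i ∈ s, (a i x)^2 ∂μ ≤ ∫ _x, (1:ℝ) ∂μ := by
          refine integral_mono (integrable_finset_sum s (fun i _ => haint i))
            (integrable_const _) ?_
          intro x
          exact hP x s
      _ = 1 := by simp
  -- Mercer-type two-step identity
  have htwo : ∀ x y, ∫ z, φ x z * φ z y ∂μ = ∑' i, a i x * a i y := by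
    intro x y
    have h1 : ∫ z, φ x z * φ z y ∂μ = ∫ z, φ x z * φ y z ∂μ := by
      refine integral_congr_ae (Filter.Eventually.of_forall fun z => ?_)
      show φ x z * φ z y = φ x z * φ y z
      rw [hφsymm z y]
    have h2 := myParseval e (F x) (F y)
    have hfun : (fun i => (⟪F x, e i⟫ : ℝ) * ⟪F y, e i⟫) = fun i => a i x * a i y := by
      funext i
      rw [key1, key1]
    rw [hfun] at h2
    have h3' : ∑' i, a i x * a i y = ⟪F x, F y⟫ := h2.tsum_eq
    rw [key2] at h3'
    rw [h1, h3']
  -- now assemble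
  have hmain := main_ind (μ := μ) φ hφmeas hφ01 a lam ham hab hP h3 h4 hl1 hl2 m 0
  -- rewrite the cyclic product
  have hstep1 : ∀ x : Fin (m + 2) → X,
      (∏ i : Fin (m+2), φ (x i) (x ⟨(i.val + 1) % (m+2), Nat.mod_lt _ (by omega)⟩))
        = (∏ j : Fin (m+1), φ (x j.castSucc) (x j.succ)) * φ (x (Fin.last (m+1))) (x 0) := by
    intro x
    rw [Fin.prod_univ_castSucc]
    congr 1
    · refine Finset.prod_congr rfl fun j _ => ?_
      congr 1
      refine congrArg x (Fin.ext ?_)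
      have hj := j.isLt
      simp only [Fin.coe_castSucc, Fin.val_succ]
      rw [Nat.mod_eq_of_lt (by omega)]
    · congr 1
      refine congrArg x (Fin.ext ?_)
      simp only [Fin.val_last, Fin.val_zero]
      rw [show m + 1 + 1 = m + 2 by omega, Nat.mod_self]
  refine Eq.trans (integral_congr_ae (Filter.Eventually.of_forall hstep1)) ?_
  set F2 : (Fin (m+2) → X) → ℝ := fun x =>
    (∏ j : Fin (m+1), φ (x j.castSucc) (x j.succ)) * φ (x (Fin.last (m+1))) (x 0) with hF2
  have hF2m : Measurable F2 := by
    apply Measurable.mul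
    · refine Finset.measurable_prod _ fun j _ => ?_
      have hm : Measurable fun v : Fin (m+2) → X => (v j.castSucc, v j.succ) :=
        (measurable_pi_apply _).prodMk (measurable_pi_apply _)
      exact hφmeas.comp hm
    · have hm : Measurable fun v : Fin (m+2) → X => (v (Fin.last (m+1)), v 0) :=
        (measurable_pi_apply _).prodMk (measurable_pi_apply _)
      exact hφmeas.comp hm
  have hF2b : ∀ v, |F2 v| ≤ 1 := by
    intro v
    rw [hF2, abs_mul]
    have hp : |∏ j : Fin (m+1), φ (v j.castSucc) (v j.succ)| ≤ 1 := by
      rw [Finset.abs_prod]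
      apply Finset.prod_le_one
      · intro j _; exact abs_nonneg _
      · intro j _; exact hφb _ _
    calc |∏ j : Fin (m+1), φ (v j.castSucc) (v j.succ)| * |φ (v (Fin.last (m+1))) (v 0)|
        ≤ 1 * 1 := mul_le_mul hp (hφb _ _) (abs_nonneg _) zero_le_one
      _ = 1 := by norm_num
  rw [peel_last (μ := μ) F2 hF2m hF2b]
  have hF2snoc : ∀ (w : Fin (m+1) → X) (z : X),
      F2 (Fin.snoc w z) = (∏ j : Fin m, φ (w j.castSucc) (w j.succ)) *
        (φ (w (Fin.last m)) z * φ z (w 0)) := by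
    intro w z
    simp only [hF2]
    have h0 : (Fin.snoc w z : Fin (m+2) → X) 0 = w 0 := by
      have : (0 : Fin (m+2)) = Fin.castSucc (0 : Fin (m+1)) := rfl
      rw [this, Fin.snoc_castSucc]
    have hlast : (Fin.snoc w z : Fin (m+2) → X) (Fin.last (m+1)) = z := by simp
    have hprod : (∏ j : Fin (m+1), φ ((Fin.snoc w z : Fin (m+2) → X) j.castSucc)
          ((Fin.snoc w z : Fin (m+2) → X) j.succ))
        = (∏ j : Fin m, φ (w j.castSucc) (w j.succ)) * φ (w (Fin.last m)) z := by
      rw [Fin.prod_univ_castSucc]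
      congr 1
      · refine Finset.prod_congr rfl fun j _ => ?_
        rw [Fin.succ_castSucc, Fin.snoc_castSucc, Fin.snoc_castSucc]
      · rw [Fin.succ_last, Fin.snoc_last, Fin.snoc_castSucc]
    rw [hprod, h0, hlast, mul_assoc]
  have hinner : ∀ w : Fin (m+1) → X,
      ∫ z, F2 (Fin.snoc w z) ∂μ
        = (∏ j : Fin m, φ (w j.castSucc) (w j.succ)) *
            (∑' i, lam i ^ 0 * a i (w (Fin.last m)) * a i (w 0)) := by
    intro w
    simp_rw [hF2snoc w]
    rw [integral_const_mul, htwo (w (Fin.last m)) (w 0)]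
    congr 1
    exact (tsum_congr fun i => by rw [pow_zero, one_mul]).symm
  calc ∫ w, (∫ z, F2 (Fin.snoc w z) ∂μ) ∂(Measure.pi fun _ : Fin (m+1) => μ)
      = ∫ w : Fin (m+1) → X, (∏ j : Fin m, φ (w j.castSucc) (w j.succ)) *
          (∑' i, lam i ^ 0 * a i (w (Fin.last m)) * a i (w 0))
          ∂(Measure.pi fun _ => μ) :=
        integral_congr_ae (Filter.Eventually.of_forall hinner)
    _ = ∑' i, lam i ^ (0 + m + 2) := hmain
    _ = ∑' i, lam i ^ (m + 2) := by norm_num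
end

section
/- Let g: [0,1) → [0,∞) be integrable with ∫_0^1 g(x) dx = p, and define φ(x_1, x_2) = g(x_1 ⊕ x_2) where ⊕ is addition modulo 1, with μ Lebesgue measure on [0,1). Then the associated integral operator T on L^2[0,1) satisfies: the constant function 1 is an eigenfunction with eigenvalue p, and for each k ≥ 1 the nonzero eigenvalues arising from frequency ±k are ±|ĝ(k)| where ĝ(k) = ∫_0^1 g(x) e^{−2πikx} dx; consequently ∑_{i ≥ 2} λ_i^3 = 0 where the sum is over eigenvalues other than the one with constant eigenfunction. -/
open MeasureTheory Real

lemma perExt_intervalIntegrable {F : ℝ → ℂ} (hF : IntegrableOn F (Set.Ico (0:ℝ) 1)) :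
    ∀ a b : ℝ, IntervalIntegrable (fun y => F (Int.fract y)) volume a b := by
  set G : ℝ → ℂ := fun y => F (Int.fract y) with hGdef
  have h01 : IntervalIntegrable G volume 0 1 := by
    rw [intervalIntegrable_iff_integrableOn_Ioc_of_le zero_le_one]
    have h1 : IntegrableOn G (Set.Ico (0:ℝ) 1) :=
      hF.congr_fun (fun y hy => by simp [hGdef, Int.fract_eq_self.mpr ⟨hy.1, hy.2⟩])
        measurableSet_Ico
    exact h1.congr_set_ae Ico_ae_eq_Ioc.symm
  have hstep : ∀ t : ℝ, (∃ n : ℤ, t = n) → IntervalIntegrable G volume t (t + 1) := by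
    rintro t ⟨n, rfl⟩
    have h2 := h01.comp_add_right (-(n : ℝ))
    have h3 : (fun x => G (x + -(n:ℝ))) = G := by
      funext x
      simp only [hGdef]
      rw [show x + -(n:ℝ) = x + (-n : ℤ) by push_cast; ring, Int.fract_add_intCast]
    rw [h3] at h2
    simpa [add_comm] using h2
  have hnat : ∀ (n : ℤ) (m : ℕ), IntervalIntegrable G volume n (n + m) := by
    intro n m
    induction m with
    | zero => simp
    | succ k ih =>
      have h4 : IntervalIntegrable G volume ((n:ℝ) + k) ((n:ℝ) + k + 1) :=
        hstep _ ⟨n + k, by push_cast; ring⟩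
      have h5 := ih.trans h4
      have : ((n:ℝ) + (k+1:ℕ)) = (n:ℝ) + k + 1 := by push_cast; ring
      rw [this]
      exact h5
  intro a b
  set n : ℤ := ⌊min a b⌋ with hn
  set m : ℕ := ⌈max a b - (n:ℝ)⌉₊ with hm
  have h1 : (n : ℝ) ≤ min a b := Int.floor_le _
  have h2 : max a b ≤ (n:ℝ) + m := by
    have := Nat.le_ceil (max a b - (n : ℝ))
    linarith
  refine (hnat n m).mono_set ?_
  rw [Set.uIcc_of_le (h1.trans ((min_le_max).trans h2))]
  intro x hx
  rcases Set.mem_uIcc.mp hx with h | h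
  · exact ⟨h1.trans (le_trans (min_le_left _ _) h.1), h.2.trans (le_trans (le_max_right a b) h2)⟩
  · exact ⟨h1.trans (le_trans (min_le_right _ _) h.1), h.2.trans (le_trans (le_max_left a b) h2)⟩

lemma perExt_key {F : ℝ → ℂ} (hF : IntegrableOn F (Set.Ico (0:ℝ) 1)) (x : ℝ) :
    IntegrableOn (fun y => F (Int.fract (x + y))) (Set.Ico (0:ℝ) 1) ∧
    ∫ y in Set.Ico (0:ℝ) 1, F (Int.fract (x + y)) = ∫ u in Set.Ico (0:ℝ) 1, F u := by
  set G : ℝ → ℂ := fun y => F (Int.fract y) with hGdef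
  have hper : Function.Periodic G 1 := fun y => by
    simp only [hGdef]
    rw [show y + (1:ℝ) = y + ((1:ℤ):ℝ) by norm_num, Int.fract_add_intCast]
  have hii := perExt_intervalIntegrable hF
  have hcomp : IntervalIntegrable (fun y => G (x + y)) volume 0 1 := by
    have h := (hii x (x + 1)).comp_add_left x
    simpa using h
  have hint : IntegrableOn (fun y => F (Int.fract (x + y))) (Set.Ico (0:ℝ) 1) := by
    have := (intervalIntegrable_iff_integrableOn_Ioc_of_le (zero_le_one)).mp hcomp
    exact this.congr_set_ae Ico_ae_eq_Ioc
  refine ⟨hint, ?_⟩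
  have e1 : ∫ y in Set.Ico (0:ℝ) 1, F (Int.fract (x + y)) = ∫ y in (0:ℝ)..1, G (x + y) := by
    rw [intervalIntegral.integral_of_le zero_le_one]
    exact setIntegral_congr_set Ico_ae_eq_Ioc
  have e2 : ∫ y in (0:ℝ)..1, G (x + y) = ∫ y in x..(x+1), G y := by
    simpa using intervalIntegral.integral_comp_add_left G x (a := 0) (b := 1)
  have e3 : ∫ y in x..(x+1), G y = ∫ y in (0:ℝ)..(0+1), G y := hper.intervalIntegral_add_eq x 0
  have e4 : ∫ y in (0:ℝ)..1, G y = ∫ u in Set.Ico (0:ℝ) 1, F u := by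
    rw [intervalIntegral.integral_of_le zero_le_one, ← setIntegral_congr_set Ico_ae_eq_Ioc]
    exact setIntegral_congr_fun measurableSet_Ico
      (fun y hy => by simp [hGdef, Int.fract_eq_self.mpr ⟨hy.1, hy.2⟩])
  rw [e1, e2, e3, zero_add, e4]

lemma exp_per (k : ℤ) (t : ℝ) (n : ℤ) :
    Complex.exp (((2*π*k*(t + n) : ℝ):ℂ) * Complex.I)
      = Complex.exp (((2*π*k*t : ℝ):ℂ) * Complex.I) := by
  rw [show ((2*π*k*(t+n) : ℝ):ℂ) * Complex.I
      = ((2*π*k*t : ℝ):ℂ) * Complex.I + ((k*n : ℤ):ℂ) * (2*π*Complex.I) by push_cast; ring,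
    Complex.exp_add, Complex.exp_int_mul_two_pi_mul_I, mul_one]

lemma exp_addl (k : ℤ) (a b : ℝ) :
    Complex.exp (((2*π*k*(a+b) : ℝ):ℂ) * Complex.I)
      = Complex.exp (((2*π*k*a : ℝ):ℂ) * Complex.I) * Complex.exp (((2*π*k*b : ℝ):ℂ) * Complex.I) := by
  rw [← Complex.exp_add]; congr 1; push_cast; ring


theorem convolution_kernel_spectrum
    (p : ℝ) (g : ℝ → ℝ)
    (hg0 : ∀ x, 0 ≤ g x)
    (hgint : IntegrableOn g (Set.Ico (0:ℝ) 1))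
    (hgp : ∫ x in Set.Ico (0:ℝ) 1, g x = p) :
    -- the Fourier coefficients of g
    let ghat : ℤ → ℂ := fun k =>
      ∫ x in Set.Ico (0:ℝ) 1, (g x : ℂ) * Complex.exp (-(((2 * π * k * x : ℝ) : ℂ) * Complex.I))
    -- the integral operator with kernel φ(x₁,x₂) = g(x₁ ⊕ x₂)
    let T : (ℝ → ℂ) → (ℝ → ℂ) := fun h x =>
      ∫ y in Set.Ico (0:ℝ) 1, (g (Int.fract (x + y)) : ℂ) * h y
    -- the exponentials e_k
    let e : ℤ → ℝ → ℂ := fun k x => Complex.exp (((2 * π * k * x : ℝ) : ℂ) * Complex.I)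
    -- the constant function 1 is an eigenfunction with eigenvalue p
    (∀ x : ℝ, T (fun _ => 1) x = (p : ℂ)) ∧
    -- T e_k = ĝ(-k) e_{-k}
    (∀ (k : ℤ) (x : ℝ), T (e k) x = ghat (-k) * e (-k) x) ∧
    -- for k ≥ 1, ω_k e_k ± e_{-k} are eigenfunctions with eigenvalues ±‖ĝ(k)‖
    (∀ k : ℤ, 1 ≤ k →
      let ω : ℂ := if ghat k = 0 then 1 else ghat k / ‖ghat k‖
      (∀ x : ℝ, T (fun y => ω * e k y + e (-k) y) x
          = (‖ghat k‖ : ℂ) * (ω * e k x + e (-k) x)) ∧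
      (∀ x : ℝ, T (fun y => ω * e k y - e (-k) y) x
          = -(‖ghat k‖ : ℂ) * (ω * e k x - e (-k) x))) ∧
    -- consequently the cubes of the nonconstant eigenvalues sum to zero
    (∑' k : {k : ℤ // k ≠ 0},
        (if (0:ℤ) < k.1 then ‖ghat k.1‖ else -‖ghat k.1‖) ^ 3 = 0) := by
  intro ghat T e
  have hgC : IntegrableOn (fun u => ((g u : ℝ) : ℂ)) (Set.Ico (0:ℝ) 1) := hgint.ofReal
  -- integrability of g * e_k
  have hFint : ∀ k : ℤ, IntegrableOn
      (fun u => ((g u : ℝ):ℂ) * Complex.exp (((2*π*k*u:ℝ):ℂ) * Complex.I)) (Set.Ico (0:ℝ) 1) := by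
    intro k
    have hcont : Continuous fun u : ℝ => Complex.exp (((2*π*k*u:ℝ):ℂ) * Complex.I) := by fun_prop
    have h := hgC.bdd_mul hcont.aestronglyMeasurable
      (c := 1) (Filter.Eventually.of_forall fun u => by rw [Complex.norm_exp_ofReal_mul_I])
    exact h.congr (Filter.Eventually.of_forall fun u => mul_comm _ _)
  have key := fun (k : ℤ) (x : ℝ) => perExt_key (hFint k) x
  have key0 := fun (x : ℝ) => perExt_key hgC x
  -- pointwise factorization
  have hpt : ∀ (k : ℤ) (x y : ℝ), (g (Int.fract (x+y)) : ℂ) * e k y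
      = e (-k) x * (((g (Int.fract (x+y)) : ℝ):ℂ)
          * Complex.exp (((2*π*k*(Int.fract (x+y)):ℝ):ℂ) * Complex.I)) := by
    intro k x y
    have h1 : Complex.exp (((2*π*k*(Int.fract (x+y)):ℝ):ℂ) * Complex.I)
        = Complex.exp (((2*π*k*(x+y):ℝ):ℂ) * Complex.I) := by
      rw [show Int.fract (x+y) = (x+y) + ((-⌊x+y⌋ : ℤ) : ℝ) by
        rw [Int.fract]; push_cast; ring]
      exact exp_per k (x+y) (-⌊x+y⌋)
    have h2 : e (-k) x * e k x = 1 := by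
      simp only [e, ← Complex.exp_add]
      rw [show (((2*π*((-k:ℤ):ℝ)*x : ℝ):ℂ) * Complex.I + ((2*π*(k:ℝ)*x : ℝ):ℂ) * Complex.I) = 0 by
        push_cast; ring]
      exact Complex.exp_zero
    simp only [e] at h2 ⊢
    rw [h1, exp_addl k x y]
    calc (g (Int.fract (x+y)) : ℂ) * Complex.exp (((2*π*(k:ℝ)*y : ℝ):ℂ) * Complex.I)
        = (Complex.exp (((2*π*((-k:ℤ):ℝ)*x : ℝ):ℂ) * Complex.I)
            * Complex.exp (((2*π*(k:ℝ)*x : ℝ):ℂ) * Complex.I))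
          * ((g (Int.fract (x+y)) : ℂ) * Complex.exp (((2*π*(k:ℝ)*y : ℝ):ℂ) * Complex.I)) := by
            rw [h2, one_mul]
      _ = _ := by ring
  -- ghat (-k) as integral of g * e_k
  have hghat : ∀ k : ℤ, ghat (-k)
      = ∫ u in Set.Ico (0:ℝ) 1, ((g u:ℝ):ℂ) * Complex.exp (((2*π*k*u:ℝ):ℂ) * Complex.I) := by
    intro k
    simp only [ghat]
    apply integral_congr_ae
    apply Filter.Eventually.of_forall
    intro u
    congr 1
    push_cast
    ring
  -- T e_k = ghat(-k) e_{-k}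
  have hTe : ∀ (k : ℤ) (x : ℝ),
      (∫ y in Set.Ico (0:ℝ) 1, (g (Int.fract (x+y)) : ℂ) * e k y) = ghat (-k) * e (-k) x := by
    intro k x
    rw [integral_congr_ae (Filter.Eventually.of_forall (hpt k x))]
    rw [integral_const_mul, (key k x).2, ← hghat k]
    ring
  -- integrability of y ↦ g(fract(x+y)) * e_k y
  have hI : ∀ (k : ℤ) (x : ℝ),
      IntegrableOn (fun y => (g (Int.fract (x+y)) : ℂ) * e k y) (Set.Ico (0:ℝ) 1) := by
    intro k x
    have h := ((key k x).1.const_mul (e (-k) x))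
    exact h.congr (Filter.Eventually.of_forall fun y => (hpt k x y).symm)
  -- conjugation symmetry
  have hconj : ∀ k : ℤ, ghat (-k) = (starRingEnd ℂ) (ghat k) := by
    intro k
    simp only [ghat]
    rw [← integral_conj]
    apply integral_congr_ae
    apply Filter.Eventually.of_forall
    intro u
    dsimp only
    rw [map_mul, Complex.conj_ofReal, ← Complex.exp_conj, map_neg, map_mul, Complex.conj_I,
      Complex.conj_ofReal]
    congr 1
    push_cast
    ring
  refine ⟨?_, ?_, ?_, ?_⟩
  · -- constant function
    intro x
    show (∫ y in Set.Ico (0:ℝ) 1, (g (Int.fract (x+y)) : ℂ) * 1) = (p : ℂ)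
    simp only [mul_one]
    rw [(key0 x).2, show ((p:ℝ):ℂ) = ((∫ u in Set.Ico (0:ℝ) 1, g u : ℝ) : ℂ) by rw [hgp]]
    exact integral_ofReal
  · -- T e_k
    exact fun k x => hTe k x
  · -- eigenfunctions
    intro k hk ω
    have hlin : ∀ (a b : ℂ) (x : ℝ),
        (∫ y in Set.Ico (0:ℝ) 1, (g (Int.fract (x+y)) : ℂ) * (a * e k y + b * e (-k) y))
          = a * (ghat (-k) * e (-k) x) + b * (ghat k * e k x) := by
      intro a b x
      have heq : ∀ y, (g (Int.fract (x+y)) : ℂ) * (a * e k y + b * e (-k) y)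
          = a * ((g (Int.fract (x+y)) : ℂ) * e k y) + b * ((g (Int.fract (x+y)) : ℂ) * e (-k) y) :=
        fun y => by ring
      rw [integral_congr_ae (Filter.Eventually.of_forall heq),
        integral_add ((hI k x).const_mul a) ((hI (-k) x).const_mul b),
        integral_const_mul, integral_const_mul, hTe k x, hTe (-k) x, neg_neg]
    have hcc := hconj k
    set c : ℂ := ghat k with hc
    set r : ℝ := ‖c‖ with hr
    have halg : ∀ x : ℝ, ω * (ghat (-k) * e (-k) x) + (ghat k * e k x)
        = (r:ℂ) * (ω * e k x + e (-k) x) ∧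
        ω * (ghat (-k) * e (-k) x) - (ghat k * e k x)
        = -(r:ℂ) * (ω * e k x - e (-k) x) := by
      intro x
      by_cases hc0 : c = 0
      · have : ghat (-k) = 0 := by rw [hcc, hc0, map_zero]
        simp [ω, hc0, this, hr, ← hc]
      · have hrne : (r:ℂ) ≠ 0 := by
          simp only [hr, ne_eq, Complex.ofReal_eq_zero, norm_eq_zero]
          exact hc0
        have hω : ω = c / (r:ℂ) := by simp only [ω, ← hc, ← hr, if_neg hc0]
        have hmc : c * (starRingEnd ℂ) c = (r:ℂ)^2 := by
          rw [Complex.mul_conj]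
          norm_cast
          rw [Complex.normSq_eq_norm_sq, hr]
        rw [hcc, hω, ← hc]
        constructor
        · field_simp
          linear_combination (e (-k) x) * hmc
        · field_simp
          linear_combination (e (-k) x) * hmc
    constructor
    · intro x
      show (∫ y in Set.Ico (0:ℝ) 1, (g (Int.fract (x+y)) : ℂ) * (ω * e k y + e (-k) y)) = _
      rw [integral_congr_ae (Filter.Eventually.of_forall (fun y =>
        show (g (Int.fract (x+y)) : ℂ) * (ω * e k y + e (-k) y)
          = (g (Int.fract (x+y)) : ℂ) * (ω * e k y + 1 * e (-k) y) from by ring)),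
        hlin ω 1 x]
      have := (halg x).1
      linear_combination this
    · intro x
      show (∫ y in Set.Ico (0:ℝ) 1, (g (Int.fract (x+y)) : ℂ) * (ω * e k y - e (-k) y)) = _
      rw [integral_congr_ae (Filter.Eventually.of_forall (fun y =>
        show (g (Int.fract (x+y)) : ℂ) * (ω * e k y - e (-k) y)
          = (g (Int.fract (x+y)) : ℂ) * (ω * e k y + (-1) * e (-k) y) from by ring)),
        hlin ω (-1) x]
      have := (halg x).2
      linear_combination this
  · -- tsum
    have hnorm : ∀ k : ℤ, ‖ghat (-k)‖ = ‖ghat k‖ := fun k => by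
      rw [hconj k]; exact RCLike.norm_conj _
    set f : {k : ℤ // k ≠ 0} → ℝ :=
      fun k => (if (0:ℤ) < k.1 then ‖ghat k.1‖ else -‖ghat k.1‖) ^ 3 with hfdef
    have hσ : ∀ k : {k : ℤ // k ≠ 0}, ({ val := -k.1, property := neg_ne_zero.mpr k.2 } : {k : ℤ // k ≠ 0}) ∈ Set.univ := fun _ => trivial
    let σ : {k : ℤ // k ≠ 0} ≃ {k : ℤ // k ≠ 0} :=
      ⟨fun k => ⟨-k.1, neg_ne_zero.mpr k.2⟩, fun k => ⟨-k.1, neg_ne_zero.mpr k.2⟩,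
        fun k => by simp, fun k => by simp⟩
    have hfneg : ∀ k, f (σ k) = - f k := by
      rintro ⟨k, hk⟩
      simp only [hfdef, σ, Equiv.coe_fn_mk]
      rw [hnorm k]
      by_cases h : 0 < k
      · rw [if_neg (by omega), if_pos h]; ring
      · rw [if_pos (by omega), if_neg h]; ring
    by_cases hs : Summable f
    · have h1 : ∑' k, f k = ∑' k, f (σ k) := (σ.tsum_eq f).symm
      have h2 : ∑' k, f (σ k) = - ∑' k, f k := by
        calc ∑' k, f (σ k) = ∑' k, - f k := tsum_congr hfneg
          _ = - ∑' k, f k := tsum_neg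
      have := h1.trans h2
      linarith
    · exact tsum_eq_zero_of_not_summable hs
end
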